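/- arXiv:2102.01725 — 3 statements merged into one kernel-verified Lean document; each statement's English description precedes it below -/
import Mathlib

section
/- In the Hardy space H², the n-th optimal polynomial approximant of 1/(1−z) is q_n(z) = Σ_{j=0}^n ((n+1−j)/(n+2)) z^j. -/
open scoped BigOperators
open Polynomial Filter

noncomputable section

/-- Coefficient sequence of the product p·f, where f is an analytic function on the disk
given by its Taylor coefficient sequence. -/
def polyMulSeq (p : Polynomial ℂ) (f : ℕ → ℂ) : ℕ → ℂ :=
  fun n => ∑ j ∈ Finset.range (n + 1), p.coeff j * f (n - j)

/-- The constant function 1 as a Taylor coefficient sequence. -/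
def oneSeq : ℕ → ℂ := fun n => if n = 0 then 1 else 0

/-- Membership in the weighted Hardy space H²_ω. -/
def MemHw (ω : ℕ → ℝ) (f : ℕ → ℂ) : Prop :=
  Summable (fun k => ‖f k‖ ^ 2 * ω k)

/-- Squared weighted norm ‖f‖²_ω. -/
def wNormSq (ω : ℕ → ℝ) (f : ℕ → ℂ) : ℝ := ∑' k, ‖f k‖ ^ 2 * ω k

/-- Weighted inner product ⟨f,g⟩_ω. -/
def wInner (ω : ℕ → ℝ) (f g : ℕ → ℂ) : ℂ :=
  ∑' k, f k * (starRingEnd ℂ) (g k) * (ω k : ℂ)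

/-- `q` is the n-th optimal polynomial approximant of 1/f in H²_ω. -/
def IsOPA (ω : ℕ → ℝ) (f : ℕ → ℂ) (n : ℕ) (q : Polynomial ℂ) : Prop :=
  q.natDegree ≤ n ∧
  ∀ p : Polynomial ℂ, p.natDegree ≤ n →
    wNormSq ω (polyMulSeq q f - oneSeq) ≤ wNormSq ω (polyMulSeq p f - oneSeq)

section Aux

private def F : ℕ → ℂ := fun k => if k = 0 then 1 else if k = 1 then -1 else 0

private lemma pm_zero (p : Polynomial ℂ) : polyMulSeq p F 0 = p.coeff 0 := by
  simp [polyMulSeq, F]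

private lemma pm_succ (p : Polynomial ℂ) (k : ℕ) :
    polyMulSeq p F (k + 1) = p.coeff (k + 1) - p.coeff k := by
  unfold polyMulSeq
  rw [Finset.sum_range_succ, Finset.sum_range_succ]
  have h0 : ∀ j ∈ Finset.range k, p.coeff j * F (k + 1 - j) = 0 := by
    intro j hj
    rw [Finset.mem_range] at hj
    have h1 : k + 1 - j ≠ 0 := by omega
    have h2 : k + 1 - j ≠ 1 := by omega
    simp [F, h1, h2]
  rw [Finset.sum_eq_zero h0]
  have e1 : k + 1 - k = 1 := by omega
  have e2 : k + 1 - (k + 1) = 0 := by omega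
  rw [e1, e2]
  simp [F]
  ring

private lemma pm_sum (p : Polynomial ℂ) (m : ℕ) :
    ∑ k ∈ Finset.range (m + 1), polyMulSeq p F k = p.coeff m := by
  induction m with
  | zero => simp [pm_zero]
  | succ m ih => rw [Finset.sum_range_succ, ih, pm_succ]; ring

private lemma g_sum {n : ℕ} (p : Polynomial ℂ) (hp : p.natDegree ≤ n) :
    ∑ k ∈ Finset.range (n + 2), (polyMulSeq p F - oneSeq) k = -1 := by
  simp only [Pi.sub_apply, Finset.sum_sub_distrib]
  have h1 : ∑ k ∈ Finset.range (n + 2), polyMulSeq p F k = 0 := by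
    have : (n : ℕ) + 2 = (n + 1) + 1 := by omega
    rw [this, pm_sum]
    exact Polynomial.coeff_eq_zero_of_natDegree_lt (by omega)
  have h2 : ∑ k ∈ Finset.range (n + 2), oneSeq k = 1 := by
    simp [oneSeq, Finset.sum_ite_eq']
  rw [h1, h2]; ring

private lemma g_zero {n : ℕ} (p : Polynomial ℂ) (hp : p.natDegree ≤ n) :
    ∀ k ∉ Finset.range (n + 2), (polyMulSeq p F - oneSeq) k = 0 := by
  intro k hk
  rw [Finset.mem_range, not_lt] at hk
  obtain ⟨m, rfl⟩ : ∃ m, k = m + 1 := ⟨k - 1, by omega⟩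
  have h1 : p.coeff (m + 1) = 0 := Polynomial.coeff_eq_zero_of_natDegree_lt (by omega)
  have h2 : p.coeff m = 0 := Polynomial.coeff_eq_zero_of_natDegree_lt (by omega)
  simp [Pi.sub_apply, pm_succ, h1, h2, oneSeq]

private lemma wnorm_eq {n : ℕ} (p : Polynomial ℂ) (hp : p.natDegree ≤ n) :
    wNormSq (fun _ => 1) (polyMulSeq p F - oneSeq) =
      ∑ k ∈ Finset.range (n + 2), ‖(polyMulSeq p F - oneSeq) k‖ ^ 2 := by
  unfold wNormSq
  simp only [mul_one]
  exact tsum_eq_sum (fun k hk => by rw [g_zero p hp k hk]; simp)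

end Aux

/-- In H², the n-th opa of 1/(1-z) is ∑_{j=0}^n ((n+1-j)/(n+2)) z^j. -/
theorem stmt_2 (n : ℕ) :
    IsOPA (fun _ => 1) (fun k => if k = 0 then 1 else if k = 1 then -1 else 0) n
      (∑ j ∈ Finset.range (n + 1),
        Polynomial.C ((((n : ℂ) + 1 - (j : ℂ)) / ((n : ℂ) + 2))) * Polynomial.X ^ j) := by
  show IsOPA (fun _ => 1) F n _
  set q : Polynomial ℂ := ∑ j ∈ Finset.range (n + 1),
      Polynomial.C ((((n : ℂ) + 1 - (j : ℂ)) / ((n : ℂ) + 2))) * Polynomial.X ^ j with hq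
  have hN : ((n : ℂ) + 2) ≠ 0 := by
    have h : ((n + 2 : ℕ) : ℂ) ≠ 0 := Nat.cast_ne_zero.mpr (by omega)
    push_cast at h
    exact h
  have hdeg : q.natDegree ≤ n := by
    refine Polynomial.natDegree_sum_le_of_forall_le _ _ ?_
    intro j hj
    refine (Polynomial.natDegree_C_mul_le _ _).trans ?_
    rw [Polynomial.natDegree_X_pow]
    exact Nat.lt_succ_iff.mp (Finset.mem_range.mp hj)
  have hqc : ∀ i, q.coeff i =
      if i ∈ Finset.range (n + 1) then ((n : ℂ) + 1 - (i : ℂ)) / ((n : ℂ) + 2) else 0 := by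
    intro i
    rw [hq, Polynomial.finset_sum_coeff]
    simp only [Polynomial.coeff_C_mul, Polynomial.coeff_X_pow, mul_ite, mul_one, mul_zero]
    rw [Finset.sum_ite_eq]
  have hg : ∀ k ∈ Finset.range (n + 2),
      (polyMulSeq q F - oneSeq) k = -(1 / ((n : ℂ) + 2)) := by
    intro k hk
    rw [Finset.mem_range] at hk
    match k with
    | 0 =>
      simp only [Pi.sub_apply, pm_zero, oneSeq, if_pos rfl]
      rw [hqc 0]
      rw [if_pos (Finset.mem_range.mpr (by omega))]
      push_cast
      field_simp
      ring
    | (m + 1) =>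
      have hone : oneSeq (m + 1) = 0 := by simp [oneSeq]
      simp only [Pi.sub_apply, pm_succ, hone, sub_zero]
      rw [hqc (m + 1), hqc m]
      have hm : m ∈ Finset.range (n + 1) := Finset.mem_range.mpr (by omega)
      by_cases hm1 : m + 1 ∈ Finset.range (n + 1)
      · rw [if_pos hm1, if_pos hm]
        push_cast
        field_simp
        ring
      · have hmn : m = n := by rw [Finset.mem_range] at hm1; omega
        subst hmn
        rw [if_neg hm1, if_pos hm]
        field_simp
        ring
  have hnorm : ‖(-(1 / ((n : ℂ) + 2)))‖ = 1 / ((n : ℝ) + 2) := by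
    rw [norm_neg, norm_div, norm_one]
    congr 1
    have h : ((n : ℂ) + 2) = ((n + 2 : ℕ) : ℂ) := by push_cast; ring
    rw [h, Complex.norm_natCast]
    push_cast
    ring
  have hqnorm : wNormSq (fun _ => 1) (polyMulSeq q F - oneSeq) = 1 / ((n : ℝ) + 2) := by
    rw [wnorm_eq q hdeg,
      Finset.sum_congr rfl (fun k hk => by rw [hg k hk]),
      Finset.sum_const, Finset.card_range, hnorm, nsmul_eq_mul]
    have hpos : (0 : ℝ) < (n : ℝ) + 2 := by positivity
    push_cast
    field_simp
  constructor
  · exact hdeg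
  · intro p hp
    rw [hqnorm, wnorm_eq p hp]
    have hsum : (1 : ℝ) ≤ ∑ k ∈ Finset.range (n + 2), ‖(polyMulSeq p F - oneSeq) k‖ := by
      calc (1 : ℝ) = ‖∑ k ∈ Finset.range (n + 2), (polyMulSeq p F - oneSeq) k‖ := by
            rw [g_sum p hp]; simp
        _ ≤ _ := norm_sum_le _ _
    have h2 := sq_sum_le_card_mul_sum_sq
      (s := Finset.range (n + 2)) (f := fun k => ‖(polyMulSeq p F - oneSeq) k‖)
    rw [Finset.card_range] at h2
    push_cast at h2
    have hpos : (0 : ℝ) < (n : ℝ) + 2 := by positivity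
    rw [div_le_iff₀ hpos]
    nlinarith [h2, hsum]
end
end

section
/- In H², the squared optimal distance from 1 to (1−z)·𝒫_n equals 1/(n+2); that is, if q_n is the n-th optimal polynomial approximant of 1/(1−z), then ‖q_n(z)(1−z) − 1‖² = 1/(n+2). -/
open scoped BigOperators
open Polynomial Filter

noncomputable section

def fOne : ℕ → ℂ := fun k => if k = 0 then 1 else if k = 1 then -1 else 0

/-- auxiliary: F p k -/
def auxF (p : Polynomial ℂ) : ℕ → ℂ := fun k => if k = 0 then 1 else p.coeff (k - 1)

lemma gseq_eq (p : Polynomial ℂ) (k : ℕ) :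
    (polyMulSeq p fOne - oneSeq) k = auxF p (k + 1) - auxF p k := by
  unfold polyMulSeq fOne oneSeq auxF
  match k with
  | 0 => simp
  | Nat.succ m =>
    simp only [Pi.sub_apply]
    rw [Finset.sum_range_succ, Finset.sum_range_succ, Finset.sum_eq_zero]
    · simp; ring
    · intro j hj
      simp only [Finset.mem_range] at hj
      have h1 : m + 1 - j ≠ 0 := by omega
      have h2 : m + 1 - j ≠ 1 := by omega
      simp [h1, h2]

lemma gseq_zero {p : Polynomial ℂ} {n : ℕ} (hp : p.natDegree ≤ n) {k : ℕ}
    (hk : k ∉ Finset.range (n + 2)) : (polyMulSeq p fOne - oneSeq) k = 0 := by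
  rw [gseq_eq]
  simp only [Finset.mem_range, not_lt] at hk
  unfold auxF
  have h1 : p.coeff k = 0 := p.coeff_eq_zero_of_natDegree_lt (by omega)
  have h2 : p.coeff (k - 1) = 0 := p.coeff_eq_zero_of_natDegree_lt (by omega)
  simp [h1, h2, show k ≠ 0 by omega]

lemma wNormSq_eq {p : Polynomial ℂ} {n : ℕ} (hp : p.natDegree ≤ n) :
    wNormSq (fun _ => 1) (polyMulSeq p fOne - oneSeq)
      = ∑ k ∈ Finset.range (n + 2), ‖(polyMulSeq p fOne - oneSeq) k‖ ^ 2 := by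
  unfold wNormSq
  rw [tsum_eq_sum (s := Finset.range (n + 2))]
  · simp
  · intro k hk; rw [gseq_zero hp hk]; simp

lemma sum_gseq {p : Polynomial ℂ} {n : ℕ} (hp : p.natDegree ≤ n) :
    ∑ k ∈ Finset.range (n + 2), (polyMulSeq p fOne - oneSeq) k = -1 := by
  have := Finset.sum_range_sub (auxF p) (n + 2)
  simp only [← gseq_eq] at this
  rw [this]
  unfold auxF
  simp [p.coeff_eq_zero_of_natDegree_lt (show p.natDegree < n + 1 by omega)]

lemma lower_bound {p : Polynomial ℂ} {n : ℕ} (hp : p.natDegree ≤ n) :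
    1 / ((n : ℝ) + 2) ≤ wNormSq (fun _ => 1) (polyMulSeq p fOne - oneSeq) := by
  rw [wNormSq_eq hp]
  set g := polyMulSeq p fOne - oneSeq
  have h1 : (1 : ℝ) ≤ ∑ k ∈ Finset.range (n + 2), ‖g k‖ := by
    calc (1:ℝ) = ‖∑ k ∈ Finset.range (n+2), g k‖ := by rw [sum_gseq hp]; simp
    _ ≤ ∑ k ∈ Finset.range (n+2), ‖g k‖ := norm_sum_le _ _
  have h2 := sq_sum_le_card_mul_sum_sq (s := Finset.range (n+2)) (f := fun k => ‖g k‖)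
  simp only [Finset.card_range] at h2
  have h3 : (1:ℝ) ≤ (∑ k ∈ Finset.range (n+2), ‖g k‖) ^ 2 := one_le_pow₀ h1
  have h4 : (1:ℝ) ≤ ((n:ℝ) + 2) * ∑ k ∈ Finset.range (n+2), ‖g k‖ ^ 2 := by
    calc (1:ℝ) ≤ _ := h3
    _ ≤ ((n+2 : ℕ) : ℝ) * ∑ k ∈ Finset.range (n+2), ‖g k‖ ^ 2 := h2
    _ = _ := by push_cast; ring_nf
  rw [div_le_iff₀ (by positivity)]
  linarith

def pstar (n : ℕ) : Polynomial ℂ :=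
  ∑ k ∈ Finset.range (n + 1), Polynomial.monomial k (((n : ℂ) + 1 - k) / ((n : ℂ) + 2))

lemma pstar_natDegree (n : ℕ) : (pstar n).natDegree ≤ n := by
  apply Polynomial.natDegree_sum_le_of_forall_le
  intro k hk
  simp only [Finset.mem_range] at hk
  exact (Polynomial.natDegree_monomial_le _).trans (by omega)

lemma pstar_coeff (n j : ℕ) :
    (pstar n).coeff j = if j < n + 1 then ((n : ℂ) + 1 - j) / ((n : ℂ) + 2) else 0 := by
  unfold pstar
  rw [Polynomial.finset_sum_coeff]
  simp only [Polynomial.coeff_monomial]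
  rw [Finset.sum_ite_eq' (Finset.range (n+1)) j]
  simp [Finset.mem_range]

lemma hc2 (n : ℕ) : ((n : ℂ) + 2) ≠ 0 := by
  have : (0:ℝ) < (n:ℝ) + 2 := by positivity
  intro h
  have := congrArg Complex.re h
  simp at this
  linarith

lemma gseq_pstar (n : ℕ) {k : ℕ} (hk : k ∈ Finset.range (n + 2)) :
    (polyMulSeq (pstar n) fOne - oneSeq) k = -(1 / ((n : ℂ) + 2)) := by
  simp only [Finset.mem_range] at hk
  rw [gseq_eq]
  unfold auxF
  rcases Nat.eq_zero_or_pos k with h0 | hpos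
  · subst h0
    simp only [pstar_coeff]
    norm_num
    rw [div_sub_one (hc2 n)]
    rw [show (n:ℂ) + 1 - ((n:ℂ) + 2) = -1 by ring, neg_div, one_div]
  · rw [if_neg (by omega), if_neg (by omega)]
    simp only [pstar_coeff]
    rcases Nat.lt_or_ge k (n+1) with hlt | hge
    · rw [if_pos (by omega), if_pos (by omega)]
      have h1 : ((k - 1 : ℕ) : ℂ) = (k : ℂ) - 1 := by
        push_cast [Nat.cast_sub (by omega : 1 ≤ k)]; ring
      rw [Nat.add_sub_cancel, h1]
      field_simp
      ring
    · have hk1 : k = n + 1 := by omega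
      subst hk1
      rw [if_neg (by omega), if_pos (by omega)]
      have h1 : ((n + 1 - 1 : ℕ) : ℂ) = (n : ℂ) := by norm_num
      rw [h1]
      field_simp
      ring

lemma upper_bound (n : ℕ) :
    wNormSq (fun _ => 1) (polyMulSeq (pstar n) fOne - oneSeq) = 1 / ((n : ℝ) + 2) := by
  rw [wNormSq_eq (pstar_natDegree n)]
  rw [Finset.sum_congr rfl (fun k hk => by rw [gseq_pstar n hk])]
  have hnorm : ‖-(1 / ((n : ℂ) + 2))‖ ^ 2 = (1 / ((n:ℝ) + 2)) ^ 2 := by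
    rw [norm_neg]
    have : (1 / ((n : ℂ) + 2)) = ((1 / ((n:ℝ) + 2) : ℝ) : ℂ) := by push_cast; ring
    rw [this, Complex.norm_real, Real.norm_eq_abs, sq_abs]
  rw [Finset.sum_const, Finset.card_range, hnorm]
  have h2 : (0:ℝ) < (n:ℝ) + 2 := by positivity
  field_simp
  have hD : (4 + (n:ℝ) * 4 + (n:ℝ) ^ 2) ≠ 0 := by positivity
  linear_combination mul_inv_cancel₀ hD

/-- In H², the squared optimal distance from 1 to (1-z)·𝒫_n equals 1/(n+2). -/
theorem stmt_3 (n : ℕ) (q : Polynomial ℂ)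
    (hq : IsOPA (fun _ => 1) (fun k => if k = 0 then 1 else if k = 1 then -1 else 0) n q) :
    wNormSq (fun _ => 1)
        (polyMulSeq q (fun k => if k = 0 then 1 else if k = 1 then -1 else 0) - oneSeq)
      = 1 / ((n : ℝ) + 2) := by
  have hfe : (fun k => if k = 0 then (1:ℂ) else if k = 1 then -1 else 0) = fOne := rfl
  rw [hfe] at hq ⊢
  have h1 := lower_bound hq.1
  have h2 := (hq.2 (pstar n) (pstar_natDegree n)).trans_eq (upper_bound n)
  linarith
end
end

section
/- Let f ∈ H²_ω be nonzero, n ∈ ℕ, and let {φ_k}_{k=0}^n be polynomials with deg φ_k = k such that {φ_k f} is an orthonormal basis of f·𝒫_n. Then the n-th optimal polynomial approximant of 1/f is q_n(z) = conj(f(0)) · Σ_{k=0}^n conj(φ_k(0)) φ_k(z). -/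
open scoped BigOperators
open Polynomial Filter

noncomputable section

/-! ### Auxiliary lemmas -/

section Aux

local notation "conj'" => starRingEnd ℂ

lemma inner_term (z : ℂ) (w : ℝ) : z * (starRingEnd ℂ) z * (w:ℂ) = ((‖z‖^2 * w : ℝ) : ℂ) := by
  rw [Complex.mul_conj]
  push_cast
  rw [Complex.normSq_eq_norm_sq]
  push_cast
  ring

lemma mul_conj_norm' (z : ℂ) : z * (starRingEnd ℂ) z = ((‖z‖^2 : ℝ) : ℂ) := by
  simpa using inner_term z 1

lemma wInner_self_eq (ω : ℕ → ℝ) (g : ℕ → ℂ) : wInner ω g g = ((wNormSq ω g : ℝ) : ℂ) := by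
  unfold wInner wNormSq
  rw [Complex.ofReal_tsum]
  exact tsum_congr fun k => inner_term _ _

lemma memHw_of_wInner_self_ne_zero {ω : ℕ → ℝ} {g : ℕ → ℂ} (h : wInner ω g g ≠ 0) :
    MemHw ω g := by
  by_contra hs
  apply h
  unfold wInner
  apply tsum_eq_zero_of_not_summable
  intro hsum
  apply hs
  unfold MemHw
  rw [← Complex.summable_ofReal]
  apply hsum.congr
  intro k
  exact inner_term _ _

lemma summable_wInner {ω : ℕ → ℝ} (hω : ∀ k, 0 ≤ ω k) {f g : ℕ → ℂ}
    (hf : MemHw ω f) (hg : MemHw ω g) :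
    Summable (fun k => f k * (starRingEnd ℂ) (g k) * (ω k : ℂ)) := by
  apply Summable.of_norm
  have hb : Summable (fun k => ‖f k‖^2 * ω k + ‖g k‖^2 * ω k) := hf.add hg
  apply hb.of_nonneg_of_le (fun k => norm_nonneg _)
  intro k
  have h1 : ‖f k * (starRingEnd ℂ) (g k) * (ω k : ℂ)‖ = ‖f k‖ * ‖g k‖ * ω k := by
    rw [norm_mul, norm_mul, RCLike.norm_conj, Complex.norm_real, Real.norm_eq_abs,
      abs_of_nonneg (hω k)]
  rw [h1]
  nlinarith [sq_nonneg (‖f k‖ - ‖g k‖), hω k, norm_nonneg (f k), norm_nonneg (g k)]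

lemma memHw_const_mul {ω : ℕ → ℝ} {f : ℕ → ℂ} (c : ℂ) (hf : MemHw ω f) :
    MemHw ω (fun k => c * f k) := by
  unfold MemHw at *
  apply (hf.mul_left (‖c‖^2)).congr
  intro k
  simp [norm_mul, mul_pow]
  ring

lemma memHw_add {ω : ℕ → ℝ} (hω : ∀ k, 0 ≤ ω k) {f g : ℕ → ℂ}
    (hf : MemHw ω f) (hg : MemHw ω g) : MemHw ω (fun k => f k + g k) := by
  unfold MemHw at *
  have hb : Summable (fun k => 2 * (‖f k‖^2 * ω k) + 2 * (‖g k‖^2 * ω k)) :=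
    (hf.mul_left 2).add (hg.mul_left 2)
  apply hb.of_nonneg_of_le
  · intro k; exact mul_nonneg (sq_nonneg _) (hω k)
  · intro k
    show ‖f k + g k‖^2 * ω k ≤ _
    have h2 : ‖f k + g k‖ ≤ ‖f k‖ + ‖g k‖ := norm_add_le _ _
    have h3 : ‖f k + g k‖^2 ≤ 2*‖f k‖^2 + 2*‖g k‖^2 := by
      nlinarith [sq_nonneg (‖f k‖ - ‖g k‖), norm_nonneg (f k + g k), norm_nonneg (f k),
        norm_nonneg (g k)]
    have h4 := mul_le_mul_of_nonneg_right h3 (hω k)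
    linarith

lemma memHw_sum {ω : ℕ → ℝ} (hω : ∀ k, 0 ≤ ω k) {ι : Type*} (s : Finset ι) (F : ι → ℕ → ℂ)
    (h : ∀ i ∈ s, MemHw ω (F i)) : MemHw ω (fun m => ∑ i ∈ s, F i m) := by
  classical
  induction s using Finset.induction_on with
  | empty => simp [MemHw]
  | @insert a s hnotmem ih =>
    have := memHw_add hω (h a (Finset.mem_insert_self a s))
      (ih (fun i hi => h i (Finset.mem_insert_of_mem hi)))
    apply this.congr
    intro k
    simp [Finset.sum_insert hnotmem]

lemma memHw_oneSeq {ω : ℕ → ℝ} : MemHw ω oneSeq := by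
  unfold MemHw
  apply summable_of_ne_finset_zero (s := {0})
  intro k hk
  simp at hk
  simp [oneSeq, hk]

lemma polyMulSeq_sum {ι : Type*} (s : Finset ι) (c : ι → ℂ) (φ : ι → Polynomial ℂ) (f : ℕ → ℂ) :
    polyMulSeq (∑ k ∈ s, C (c k) * φ k) f
      = fun m => ∑ k ∈ s, c k * polyMulSeq (φ k) f m := by
  funext m
  unfold polyMulSeq
  simp only [finset_sum_coeff, coeff_C_mul, Finset.sum_mul, Finset.mul_sum]
  rw [Finset.sum_comm]
  apply Finset.sum_congr rfl
  intro k _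
  apply Finset.sum_congr rfl
  intro j _
  ring

lemma polyMulSeq_zero (f : ℕ → ℂ) : polyMulSeq 0 f = fun _ => 0 := by
  funext m; simp [polyMulSeq]

lemma polyMulSeq_at_zero (p : Polynomial ℂ) (f : ℕ → ℂ) :
    polyMulSeq p f 0 = p.eval 0 * f 0 := by
  simp [polyMulSeq, coeff_zero_eq_eval_zero]

lemma exists_repr (n : ℕ) (φ : ℕ → Polynomial ℂ)
    (hdeg : ∀ k ≤ n, (φ k).natDegree = k)
    (hlead : ∀ k ≤ n, (φ k).coeff k ≠ 0) :
    ∀ m, m ≤ n → ∀ p : Polynomial ℂ, p.natDegree ≤ m →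
      ∃ c : ℕ → ℂ, p = ∑ k ∈ Finset.range (m+1), C (c k) * φ k := by
  intro m
  induction m with
  | zero =>
    intro _ p hp
    have ha : (φ 0).coeff 0 ≠ 0 := hlead 0 (Nat.zero_le n)
    set a := (φ 0).coeff 0 with hadef
    have h0 : φ 0 = C a := Polynomial.eq_C_of_natDegree_eq_zero (hdeg 0 (Nat.zero_le n))
    have hp0 : p = C (p.coeff 0) := Polynomial.eq_C_of_natDegree_le_zero hp
    refine ⟨fun _ => p.coeff 0 / a, ?_⟩
    rw [Finset.sum_range_one, h0, ← C_mul, div_mul_cancel₀ _ ha]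
    exact hp0
  | succ m ih =>
    intro hmn p hp
    have hmn' : m ≤ n := le_trans (Nat.le_succ m) hmn
    set d := (φ (m+1)).coeff (m+1) with hd
    have hdne : d ≠ 0 := hlead (m+1) hmn
    set cl := p.coeff (m+1) / d with hcl
    set r := p - C cl * φ (m+1) with hr
    have hrdeg : r.natDegree ≤ m := by
      rw [Polynomial.natDegree_le_iff_coeff_eq_zero]
      intro N hN
      rw [hr, coeff_sub, coeff_C_mul]
      by_cases hN1 : N = m + 1
      · subst hN1
        rw [hcl, div_mul_cancel₀ _ hdne, sub_self]
      · have hgt : m + 1 < N := lt_of_le_of_ne (Nat.succ_le_of_lt hN) (Ne.symm hN1)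
        rw [Polynomial.coeff_eq_zero_of_natDegree_lt (lt_of_le_of_lt hp hgt),
          Polynomial.coeff_eq_zero_of_natDegree_lt (by rw [hdeg (m+1) hmn]; exact hgt)]
        ring
    obtain ⟨c, hc⟩ := ih hmn' r hrdeg
    refine ⟨Function.update c (m+1) cl, ?_⟩
    rw [Finset.sum_range_succ]
    have hsum : ∑ k ∈ Finset.range (m+1), C (Function.update c (m+1) cl k) * φ k
        = ∑ k ∈ Finset.range (m+1), C (c k) * φ k := by
      apply Finset.sum_congr rfl
      intro k hk
      rw [Function.update_of_ne (Finset.mem_range.mp hk).ne]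
    rw [hsum, ← hc, Function.update_self, hr, sub_add_cancel]

lemma expand_norm (ω : ℕ → ℝ) (hω0 : ω 0 = 1) (hωpos : ∀ k, 0 < ω k)
    (n : ℕ) (g : ℕ → ℕ → ℂ) (hg : ∀ k ≤ n, MemHw ω (g k))
    (horth : ∀ j ≤ n, ∀ k ≤ n, wInner ω (g j) (g k) = if j = k then 1 else 0)
    (c : ℕ → ℂ) :
    ((wNormSq ω ((fun m => ∑ k ∈ Finset.range (n+1), c k * g k m) - oneSeq) : ℝ) : ℂ)
      = ∑ k ∈ Finset.range (n+1),
          (c k - conj' (g k 0)) * conj' (c k - conj' (g k 0))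
        + (1 - ∑ k ∈ Finset.range (n+1), conj' (g k 0) * g k 0) := by
  have hωnn : ∀ k, 0 ≤ ω k := fun k => (hωpos k).le
  set N := Finset.range (n+1) with hN
  have hmem : ∀ k ∈ N, k ≤ n := fun k hk => Nat.lt_succ_iff.mp (Finset.mem_range.mp hk)
  set G : ℕ → ℂ := fun m => ∑ k ∈ N, c k * g k m with hG
  have hGmem : MemHw ω G :=
    memHw_sum hωnn N _ (fun k hk => memHw_const_mul (c k) (hg k (hmem k hk)))
  rw [← wInner_self_eq]
  have SA : Summable (fun m => G m * conj' (G m) * (ω m : ℂ)) :=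
    summable_wInner hωnn hGmem hGmem
  have SB : Summable (fun m => G m * conj' (oneSeq m) * (ω m : ℂ)) :=
    summable_wInner hωnn hGmem memHw_oneSeq
  have SC : Summable (fun m => oneSeq m * conj' (G m) * (ω m : ℂ)) :=
    summable_wInner hωnn memHw_oneSeq hGmem
  have SD : Summable (fun m => oneSeq m * conj' (oneSeq m) * (ω m : ℂ)) :=
    summable_wInner hωnn memHw_oneSeq memHw_oneSeq
  have hterm : ∀ m, (G - oneSeq) m * conj' ((G - oneSeq) m) * (ω m : ℂ)
      = (G m * conj' (G m) * (ω m : ℂ) + oneSeq m * conj' (oneSeq m) * (ω m : ℂ))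
        - (G m * conj' (oneSeq m) * (ω m : ℂ) + oneSeq m * conj' (G m) * (ω m : ℂ)) := by
    intro m
    simp only [Pi.sub_apply, map_sub]
    ring
  show wInner ω (G - oneSeq) (G - oneSeq) = _
  unfold wInner
  rw [tsum_congr hterm, Summable.tsum_sub (SA.add SD) (SB.add SC), Summable.tsum_add SA SD, Summable.tsum_add SB SC]
  have honem : ∀ m : ℕ, m ≠ 0 → oneSeq m = 0 := by
    intro m hm; simp [oneSeq, hm]
  have hzero : ∀ (F : ℕ → ℂ), (∀ m, m ≠ 0 → F m = 0) → ∑' m, F m = F 0 := by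
    intro F h
    rw [tsum_eq_sum (s := ({0} : Finset ℕ)) ?_]
    · simp
    · intro m hm
      exact h m (by simpa using hm)
  have hD : ∑' m, oneSeq m * conj' (oneSeq m) * (ω m : ℂ) = 1 := by
    rw [hzero _ (fun m hm => by rw [honem m hm]; ring)]
    simp [oneSeq, hω0]
  have hB : ∑' m, G m * conj' (oneSeq m) * (ω m : ℂ) = ∑ k ∈ N, c k * g k 0 := by
    rw [hzero _ (fun m hm => by rw [honem m hm]; simp)]
    simp [oneSeq, hω0, hG]
  have hC : ∑' m, oneSeq m * conj' (G m) * (ω m : ℂ)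
      = ∑ k ∈ N, conj' (c k) * conj' (g k 0) := by
    rw [hzero _ (fun m hm => by rw [honem m hm]; ring)]
    simp [oneSeq, hω0, hG, map_sum]
  have hA : ∑' m, G m * conj' (G m) * (ω m : ℂ) = ∑ k ∈ N, c k * conj' (c k) := by
    have hterm2 : ∀ m, G m * conj' (G m) * (ω m : ℂ)
        = ∑ j ∈ N, ∑ k ∈ N, c j * conj' (c k) * (g j m * conj' (g k m) * (ω m : ℂ)) := by
      intro m
      rw [hG]
      simp only [map_sum, map_mul, Finset.sum_mul_sum, Finset.sum_mul]
      apply Finset.sum_congr rfl; intro j _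
      rw [Finset.mul_sum, Finset.sum_mul]
      exact Finset.sum_congr rfl (fun k _ => by ring)
    have Sjk : ∀ j ∈ N, ∀ k ∈ N, Summable
        (fun m => c j * conj' (c k) * (g j m * conj' (g k m) * (ω m : ℂ))) := by
      intro j hj k hk
      exact (summable_wInner hωnn (hg j (hmem j hj)) (hg k (hmem k hk))).mul_left _
    rw [tsum_congr hterm2,
      Summable.tsum_finsetSum (fun j hj => summable_sum (fun k hk => Sjk j hj k hk))]
    have h1 : ∀ j ∈ N, ∑' m, ∑ k ∈ N, c j * conj' (c k) * (g j m * conj' (g k m) * (ω m : ℂ))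
        = ∑ k ∈ N, c j * conj' (c k) * wInner ω (g j) (g k) := by
      intro j hj
      rw [Summable.tsum_finsetSum (fun k hk => Sjk j hj k hk)]
      apply Finset.sum_congr rfl; intro k _
      rw [tsum_mul_left]; rfl
    rw [Finset.sum_congr rfl h1]
    have h2 : ∀ j ∈ N, ∑ k ∈ N, c j * conj' (c k) * wInner ω (g j) (g k)
        = if j ∈ N then c j * conj' (c j) else 0 := by
      intro j hj
      rw [show (∑ k ∈ N, c j * conj' (c k) * wInner ω (g j) (g k))
          = ∑ k ∈ N, if j = k then c j * conj' (c k) else 0 from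
        Finset.sum_congr rfl (fun k hk => by
          rw [horth j (hmem j hj) k (hmem k hk)]; split <;> simp)]
      rw [Finset.sum_ite_eq]
    rw [Finset.sum_congr rfl h2]
    apply Finset.sum_congr rfl
    intro j hj
    rw [if_pos hj]
  rw [hA, hB, hC, hD]
  have key : ∀ k ∈ N, (c k - conj' (g k 0)) * conj' (c k - conj' (g k 0))
      = c k * conj' (c k) - c k * g k 0 - conj' (c k) * conj' (g k 0)
        + conj' (g k 0) * g k 0 := by
    intro k _
    rw [map_sub, Complex.conj_conj]
    ring
  rw [Finset.sum_congr rfl key, Finset.sum_add_distrib, Finset.sum_sub_distrib,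
    Finset.sum_sub_distrib]
  ring

end Aux

/-- The n-th opa expressed via an orthonormal basis {φ_k f} of f·𝒫_n:
q_n = conj(f(0)) ∑_k conj(φ_k(0)) φ_k. -/
theorem stmt_6 (ω : ℕ → ℝ) (hω0 : ω 0 = 1) (hωpos : ∀ k, 0 < ω k)
    (f : ℕ → ℂ) (hf : MemHw ω f) (hf0 : f ≠ 0)
    (n : ℕ) (φ : ℕ → Polynomial ℂ)
    (hdeg : ∀ k ≤ n, (φ k).natDegree = k)
    (horth : ∀ j ≤ n, ∀ k ≤ n,
      wInner ω (polyMulSeq (φ j) f) (polyMulSeq (φ k) f) = if j = k then 1 else 0)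
    (q : Polynomial ℂ) (hq : IsOPA ω f n q) :
    q = Polynomial.C ((starRingEnd ℂ) (f 0)) *
          ∑ k ∈ Finset.range (n + 1),
            Polynomial.C ((starRingEnd ℂ) ((φ k).eval 0)) * φ k := by
  classical
  have hωnn : ∀ k, 0 ≤ ω k := fun k => (hωpos k).le
  set g : ℕ → ℕ → ℂ := fun k => polyMulSeq (φ k) f with hgdef
  have hg : ∀ k ≤ n, MemHw ω (g k) := by
    intro k hk
    apply memHw_of_wInner_self_ne_zero
    rw [horth k hk k hk]
    simp
  have hlead : ∀ k ≤ n, (φ k).coeff k ≠ 0 := by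
    intro k hk hc
    by_cases h0 : φ k = 0
    · have hz : wInner ω (g k) (g k) = 0 := by
        rw [hgdef]
        simp only [h0, polyMulSeq_zero]
        unfold wInner
        simp
      rw [horth k hk k hk] at hz
      simp at hz
    · have hl := Polynomial.leadingCoeff_ne_zero.mpr h0
      rw [Polynomial.leadingCoeff, hdeg k hk] at hl
      exact hl hc
  -- the target coefficients
  set β : ℕ → ℂ := fun k => (starRingEnd ℂ) ((φ k).eval 0 * f 0) with hβdef
  have hβg : ∀ k, (starRingEnd ℂ) (g k 0) = β k := by
    intro k
    rw [hgdef, hβdef]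
    simp only [polyMulSeq_at_zero]
  -- representation of q
  obtain ⟨a, ha⟩ := exists_repr n φ hdeg hlead n le_rfl q hq.1
  -- the candidate polynomial
  set P : Polynomial ℂ := ∑ k ∈ Finset.range (n+1), C (β k) * φ k with hPdef
  have hPdeg : P.natDegree ≤ n := by
    apply Polynomial.natDegree_sum_le_of_forall_le
    intro k hk
    refine le_trans (Polynomial.natDegree_C_mul_le _ _) ?_
    rw [hdeg k (Nat.lt_succ_iff.mp (Finset.mem_range.mp hk))]
    exact Nat.lt_succ_iff.mp (Finset.mem_range.mp hk)
  have hle := hq.2 P hPdeg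
  -- rewrite both products via the basis
  have hqf : polyMulSeq q f = fun m => ∑ k ∈ Finset.range (n+1), a k * g k m := by
    rw [ha, polyMulSeq_sum]
  have hPf : polyMulSeq P f = fun m => ∑ k ∈ Finset.range (n+1), β k * g k m := by
    rw [hPdef, polyMulSeq_sum]
  rw [hqf, hPf] at hle
  -- apply the expansion to both sides
  have EA := expand_norm ω hω0 hωpos n g hg horth a
  have EB := expand_norm ω hω0 hωpos n g hg horth β
  -- the β-expansion has vanishing quadratic part
  have hBzero : ∑ k ∈ Finset.range (n+1),
      (β k - (starRingEnd ℂ) (g k 0)) * (starRingEnd ℂ) (β k - (starRingEnd ℂ) (g k 0)) = 0 := by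
    apply Finset.sum_eq_zero
    intro k _
    rw [hβg k, sub_self]
    simp
  rw [hBzero, zero_add] at EB
  -- difference of the two norms is the sum of squares
  have hdiff : ((wNormSq ω ((fun m => ∑ k ∈ Finset.range (n+1), a k * g k m) - oneSeq)
        - wNormSq ω ((fun m => ∑ k ∈ Finset.range (n+1), β k * g k m) - oneSeq) : ℝ) : ℂ)
      = ∑ k ∈ Finset.range (n+1), ((‖a k - β k‖^2 : ℝ) : ℂ) := by
    push_cast [Complex.ofReal_sub]
    rw [EA, EB]
    rw [show ∀ x y : ℂ, x + y - y = x from fun x y => by ring]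
    apply Finset.sum_congr rfl
    intro k _
    rw [hβg k, mul_conj_norm']
    norm_cast
  have hsum : ∑ k ∈ Finset.range (n+1), ‖a k - β k‖^2
      = wNormSq ω ((fun m => ∑ k ∈ Finset.range (n+1), a k * g k m) - oneSeq)
        - wNormSq ω ((fun m => ∑ k ∈ Finset.range (n+1), β k * g k m) - oneSeq) := by
    have := hdiff
    rw [← Complex.ofReal_sum] at this
    exact_mod_cast this.symm
  have hzero : ∀ k ∈ Finset.range (n+1), a k = β k := by
    have hnonpos : ∑ k ∈ Finset.range (n+1), ‖a k - β k‖^2 ≤ 0 := by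
      rw [hsum]; linarith
    have heq : ∑ k ∈ Finset.range (n+1), ‖a k - β k‖^2 = 0 :=
      le_antisymm hnonpos (Finset.sum_nonneg (fun k _ => sq_nonneg _))
    intro k hk
    have := (Finset.sum_eq_zero_iff_of_nonneg (fun k _ => sq_nonneg (‖a k - β k‖))).mp heq k hk
    have hn : ‖a k - β k‖ = 0 := by
      nlinarith [norm_nonneg (a k - β k)]
    rw [norm_eq_zero, sub_eq_zero] at hn
    exact hn
  -- conclude
  rw [ha]
  rw [show Polynomial.C ((starRingEnd ℂ) (f 0)) *
        ∑ k ∈ Finset.range (n + 1), Polynomial.C ((starRingEnd ℂ) ((φ k).eval 0)) * φ k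
      = ∑ k ∈ Finset.range (n+1), C (β k) * φ k from by
    rw [Finset.mul_sum]
    apply Finset.sum_congr rfl
    intro k _
    rw [← mul_assoc, ← C_mul, hβdef]
    simp only [map_mul]
    ring_nf]
  apply Finset.sum_congr rfl
  intro k hk
  rw [hzero k hk]
end
end
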